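/- Suppose that for every integer c ≥ 0 there exists d ≥ 0 such that every tournament G with χ(G) ≥ d has a complete pair (A,B) with χ(A), χ(B) ≥ c. Then for all integers t, c ≥ 1 there exists d ≥ 1 such that every finite simple undirected graph G with chromatic number at least d and with no clique of t vertices has two subsets A, B ⊆ V(G) such that there are no edges between A and B and the induced subgraphs G[A] and G[B] both have chromatic number at least c. -/

import Mathlib

structure Tournament where
  V : Type
  fintype : Fintype V
  adj : V → V → Prop
  asymm : ∀ u v, adj u v → ¬ adj v u
  total : ∀ u v, u ≠ v → adj u v ∨ adj v u

attribute [instance] Tournament.fintype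

namespace Tournament

/-- A set of vertices is transitive if it includes no cyclic triangle. -/
def IsTransitiveSet (T : Tournament) (A : Set T.V) : Prop :=
  ∀ a ∈ A, ∀ b ∈ A, ∀ c ∈ A, T.adj a b → T.adj b c → ¬ T.adj c a

/-- The chromatic number of the subtournament induced on `A`. -/
noncomputable def chiOn (T : Tournament) (A : Set T.V) : ℕ :=
  sInf {k | ∃ C : Fin k → Set T.V, (∀ i, T.IsTransitiveSet (C i)) ∧ A ⊆ ⋃ i, C i}

noncomputable def chi (T : Tournament) : ℕ := T.chiOn Set.univ

def outN (T : Tournament) (v : T.V) : Set T.V := {u | T.adj v u}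
def inN (T : Tournament) (v : T.V) : Set T.V := {u | T.adj u v}

/-- The domination number of the subtournament induced on `A`. -/
noncomputable def domOn (T : Tournament) (A : Set T.V) : ℕ :=
  sInf {n | ∃ X : Finset T.V, ↑X ⊆ A ∧ (∀ v ∈ A, v ∉ X → ∃ x ∈ X, T.adj x v) ∧ X.card = n}

noncomputable def dom (T : Tournament) : ℕ := T.domOn Set.univ

/-- `A ⇒ B`: every edge between `A` and `B` is directed from `A` to `B`. -/
def CompleteTo (T : Tournament) (A B : Set T.V) : Prop :=
  ∀ a ∈ A, ∀ b ∈ B, T.adj a b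

def CompletePair (T : Tournament) (A B : Set T.V) : Prop :=
  Disjoint A B ∧ T.CompleteTo A B

/-- `G` has a subtournament inside `A` isomorphic to `H`. -/
def ContainsOn (G : Tournament) (A : Set G.V) (H : Tournament) : Prop :=
  ∃ f : H.V → G.V, Function.Injective f ∧ (∀ u, f u ∈ A) ∧
    ∀ u v, H.adj u v ↔ G.adj (f u) (f v)

def Contains (G H : Tournament) : Prop := G.ContainsOn Set.univ H

def IsHero (H : Tournament) : Prop :=
  ∃ c > 0, ∀ G : Tournament, ¬ G.Contains H → G.chi < c

def IsRebel (H : Tournament) : Prop :=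
  ∃ c > 0, ∀ G : Tournament, ¬ G.Contains H → G.dom < c

end Tournament

/-- The chromatic number of the subgraph of `G` induced on `A`. -/
noncomputable def gchiOn {V : Type} (G : SimpleGraph V) (A : Set V) : ℕ :=
  sInf {k | ∃ f : V → Fin k, ∀ u ∈ A, ∀ v ∈ A, G.Adj u v → f u ≠ f v}

namespace Tournament

variable (T : Tournament)

lemma singleton_transitive (x : T.V) : T.IsTransitiveSet {x} := by
  intro a ha b hb c _ hab _ _
  rw [Set.mem_singleton_iff] at ha hb
  rw [ha, hb] at hab
  exact T.asymm _ _ hab hab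

lemma chiOn_set_nonempty (S : Set T.V) :
    {k | ∃ C : Fin k → Set T.V, (∀ i, T.IsTransitiveSet (C i)) ∧ S ⊆ ⋃ i, C i}.Nonempty := by
  classical
  refine ⟨Fintype.card T.V, fun i => {(Fintype.equivFin T.V).symm i}, fun i => T.singleton_transitive _, ?_⟩
  intro v _
  exact Set.mem_iUnion.mpr ⟨Fintype.equivFin T.V v, by simp⟩

lemma chiOn_le {S : Set T.V} {k : ℕ} (C : Fin k → Set T.V)
    (h1 : ∀ i, T.IsTransitiveSet (C i)) (h2 : S ⊆ ⋃ i, C i) : T.chiOn S ≤ k :=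
  Nat.sInf_le ⟨C, h1, h2⟩

lemma exists_cover (S : Set T.V) :
    ∃ C : Fin (T.chiOn S) → Set T.V, (∀ i, T.IsTransitiveSet (C i)) ∧ S ⊆ ⋃ i, C i :=
  Nat.sInf_mem (T.chiOn_set_nonempty S)

lemma chiOn_mono {S S' : Set T.V} (h : S ⊆ S') : T.chiOn S ≤ T.chiOn S' := by
  obtain ⟨C, h1, h2⟩ := T.exists_cover S'
  exact T.chiOn_le C h1 (h.trans h2)

lemma chiOn_union (S1 S2 : Set T.V) :
    T.chiOn (S1 ∪ S2) ≤ T.chiOn S1 + T.chiOn S2 := by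
  obtain ⟨C1, h11, h12⟩ := T.exists_cover S1
  obtain ⟨C2, h21, h22⟩ := T.exists_cover S2
  refine T.chiOn_le (Fin.addCases C1 C2) ?_ ?_
  · intro i
    refine Fin.addCases (motive := fun i => T.IsTransitiveSet (Fin.addCases C1 C2 i)) ?_ ?_ i
    · intro j; simpa using h11 j
    · intro j; simpa using h21 j
  · intro v hv
    rcases hv with hv | hv
    · obtain ⟨j, hj⟩ := Set.mem_iUnion.mp (h12 hv)
      exact Set.mem_iUnion.mpr ⟨Fin.castAdd _ j, by simpa using hj⟩
    · obtain ⟨j, hj⟩ := Set.mem_iUnion.mp (h22 hv)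
      exact Set.mem_iUnion.mpr ⟨Fin.natAdd _ j, by simpa using hj⟩

lemma chiOn_singleton_le (x : T.V) : T.chiOn {x} ≤ 1 := by
  refine T.chiOn_le (fun _ : Fin 1 => {x}) (fun _ => T.singleton_transitive _) ?_
  intro v hv
  exact Set.mem_iUnion.mpr ⟨0, hv⟩

lemma nonempty_of_one_le_chiOn {S : Set T.V} (h : 1 ≤ T.chiOn S) : S.Nonempty := by
  rw [Set.nonempty_iff_ne_empty]
  rintro rfl
  have h0 : T.chiOn (∅ : Set T.V) ≤ 0 :=
    T.chiOn_le (fun i : Fin 0 => ∅) (fun i => i.elim0) (by simp)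
  omega

end Tournament

section GraphAux

variable {V : Type} [Fintype V] (G : SimpleGraph V)

lemma gchiOn_set_nonempty (A : Set V) :
    {k | ∃ f : V → Fin k, ∀ u ∈ A, ∀ v ∈ A, G.Adj u v → f u ≠ f v}.Nonempty :=
  ⟨Fintype.card V, Fintype.equivFin V,
    fun u _ v _ h hf => h.ne ((Fintype.equivFin V).injective hf)⟩

lemma exists_gcoloring (A : Set V) :
    ∃ f : V → Fin (gchiOn G A), ∀ u ∈ A, ∀ v ∈ A, G.Adj u v → f u ≠ f v :=
  Nat.sInf_mem (gchiOn_set_nonempty G A)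

lemma gchiOn_le {A : Set V} {k : ℕ} (f : V → Fin k)
    (h : ∀ u ∈ A, ∀ v ∈ A, G.Adj u v → f u ≠ f v) : gchiOn G A ≤ k :=
  Nat.sInf_le ⟨f, h⟩

lemma gchiOn_le_card {A : Set V} {κ : Type} [Fintype κ] (f : V → κ)
    (h : ∀ u ∈ A, ∀ v ∈ A, G.Adj u v → f u ≠ f v) : gchiOn G A ≤ Fintype.card κ :=
  gchiOn_le G (fun v => Fintype.equivFin κ (f v))
    (fun u hu v hv hadj heq => h u hu v hv hadj ((Fintype.equivFin κ).injective heq))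

end GraphAux

section Tourn

variable {V : Type} [Fintype V] [LinearOrder V]

/-- The auxiliary tournament on `↥W`: graph edges point forward w.r.t. the
linear order, non-edges point backward. -/
noncomputable def tourn (G : SimpleGraph V) (W : Set V) : Tournament where
  V := ↥W
  fintype := by classical exact (Set.toFinite W).fintype
  adj u v := (u < v ∧ G.Adj ↑u ↑v) ∨ (v < u ∧ ¬ G.Adj ↑u ↑v)
  asymm := by
    rintro u v (⟨h1, h2⟩ | ⟨h1, h2⟩) (⟨h3, h4⟩ | ⟨h3, h4⟩)
    · exact lt_asymm h1 h3
    · exact h4 h2.symm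
    · exact h2 h4.symm
    · exact lt_asymm h1 h3
  total := by
    intro u v huv
    rcases lt_or_gt_of_ne huv with h | h
    · by_cases ha : G.Adj ↑u ↑v
      · exact Or.inl (Or.inl ⟨h, ha⟩)
      · exact Or.inr (Or.inr ⟨h, fun h' => ha h'.symm⟩)
    · by_cases ha : G.Adj ↑u ↑v
      · exact Or.inr (Or.inl ⟨h, ha.symm⟩)
      · exact Or.inl (Or.inr ⟨h, ha⟩)

lemma tourn_adj (G : SimpleGraph V) (W : Set V) (u v : ↥W) :
    (tourn G W).adj u v ↔ (u < v ∧ G.Adj ↑u ↑v) ∨ (v < u ∧ ¬ G.Adj ↑u ↑v) :=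
  Iff.rfl

/-- Tournament chromatic number is at most graph chromatic number. -/
lemma tourn_chiOn_le (G : SimpleGraph V) (W : Set V) (S : Set ↥W) :
    (tourn G W).chiOn S ≤ gchiOn G (Subtype.val '' S) := by
  obtain ⟨f, hf⟩ := exists_gcoloring G (Subtype.val '' S)
  refine Tournament.chiOn_le _ (fun i => {u : ↥W | u ∈ S ∧ f ↑u = i}) ?_ ?_
  · intro i
    refine fun (a : ↥W) ha (b : ↥W) hb (c : ↥W) hc hab hbc hca => ?_
    have key : ∀ x y : ↥W, x ∈ S ∧ f ↑x = i → y ∈ S ∧ f ↑y = i → ¬ G.Adj ↑x ↑y := by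
      intro x y hx hy hadj
      exact hf ↑x ⟨x, hx.1, rfl⟩ ↑y ⟨y, hy.1, rfl⟩ hadj (hx.2.trans hy.2.symm)
    rw [tourn_adj] at hab hbc hca
    rcases hab with ⟨h1, h2⟩ | ⟨h1, h2⟩
    · exact key a b ha hb h2
    rcases hbc with ⟨h3, h4⟩ | ⟨h3, h4⟩
    · exact key b c hb hc h4
    rcases hca with ⟨h5, h6⟩ | ⟨h5, h6⟩
    · exact key c a hc ha h6
    · exact lt_asymm h1 (h5.trans h3)
  · refine fun (u : ↥W) hu => ?_
    exact Set.mem_iUnion.mpr ⟨f ↑u, ⟨hu, rfl⟩⟩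

/-- Mirsky-type coloring: a set on which edges are "transitively closed upward"
and all cliques have size at most `t-1` can be colored with `t-1` colors. -/
lemma mirsky (G : SimpleGraph V) {t : ℕ} (ht : 2 ≤ t) (A : Set V)
    (htr : ∀ a ∈ A, ∀ b ∈ A, ∀ c ∈ A, a < b → b < c → G.Adj a b → G.Adj b c → G.Adj a c)
    (hcl : ∀ s : Finset V, ↑s ⊆ A → G.IsClique (↑s : Set V) → s.card ≤ t - 1) :
    ∃ g : V → Fin (t - 1), ∀ u ∈ A, ∀ v ∈ A, G.Adj u v → g u ≠ g v := by
  classical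
  set Q : V → Finset (Finset V) := fun v =>
    Finset.univ.filter (fun s => ↑s ⊆ A ∧ v ∈ s ∧ (∀ u ∈ s, u ≤ v) ∧ G.IsClique (↑s : Set V))
    with hQ
  set h : V → ℕ := fun v => (Q v).sup Finset.card with hh
  have hmemQ : ∀ v (s : Finset V),
      s ∈ Q v ↔ (↑s ⊆ A ∧ v ∈ s ∧ (∀ u ∈ s, u ≤ v) ∧ G.IsClique (↑s : Set V)) := by
    intro v s; simp [hQ]
  have hsingQ : ∀ v ∈ A, ({v} : Finset V) ∈ Q v := by
    intro v hv
    refine (hmemQ v _).mpr ⟨by simp [hv], by simp, by simp, by simp⟩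
  have h_ge : ∀ v ∈ A, 1 ≤ h v := by
    intro v hv
    have h1 := Finset.le_sup (f := Finset.card) (hsingQ v hv)
    rw [Finset.card_singleton] at h1
    exact h1
  have h_le : ∀ v, h v ≤ t - 1 := by
    intro v
    apply Finset.sup_le
    intro s hs
    obtain ⟨h1, _, _, h4⟩ := (hmemQ v s).mp hs
    exact hcl s h1 h4
  have h_mono : ∀ a ∈ A, ∀ b ∈ A, a < b → G.Adj a b → h a < h b := by
    intro a ha b hb hab hadj
    obtain ⟨s, hs, hcard⟩ := Finset.exists_mem_eq_sup (Q a) ⟨{a}, hsingQ a ha⟩ Finset.card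
    obtain ⟨h1, h2, h3, h4⟩ := (hmemQ a s).mp hs
    have hbs : b ∉ s := fun hbs => absurd hab (not_lt.mpr (h3 b hbs))
    have hins : insert b s ∈ Q b := by
      refine (hmemQ b _).mpr ⟨?_, Finset.mem_insert_self _ _, ?_, ?_⟩
      · rw [Finset.coe_insert]
        exact Set.insert_subset hb h1
      · intro u hu
        rcases Finset.mem_insert.mp hu with rfl | hu'
        · exact le_refl _
        · exact (h3 u hu').trans hab.le
      · rw [Finset.coe_insert]
        refine h4.insert ?_
        intro x hx hxb
        have hx' : x ∈ s := Finset.mem_coe.mp hx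
        have hxa : x ≤ a := h3 x hx'
        rcases eq_or_lt_of_le hxa with rfl | hlt
        · exact hadj.symm
        · have hxadj : G.Adj x a := h4 hx (Finset.mem_coe.mpr h2) (ne_of_lt hlt)
          exact (htr x (h1 hx) a ha b hb hlt hab hxadj hadj).symm
    have hle2 := Finset.le_sup (f := Finset.card) hins
    rw [Finset.card_insert_of_notMem hbs] at hle2
    have e1 : h a = (Q a).sup Finset.card := rfl
    have e2 : h b = (Q b).sup Finset.card := rfl
    omega
  refine ⟨fun v => ⟨min (h v - 1) (t - 2), by omega⟩, ?_⟩
  intro u hu v hv hadj heq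
  have h1 := h_ge u hu
  have h2 := h_ge v hv
  have h3 := h_le u
  have h4 := h_le v
  have h5 : h u < h v ∨ h v < h u := by
    rcases lt_or_gt_of_ne hadj.ne with hlt | hlt
    · exact Or.inl (h_mono u hu v hv hlt hadj)
    · exact Or.inr (h_mono v hv u hu hlt hadj.symm)
  simp only [Fin.mk.injEq] at heq
  omega

/-- Graph chromatic number is at most (t-1) times tournament chromatic number, plus 1. -/
lemma gchiOn_le_mul (G : SimpleGraph V) (W : Set V) {t : ℕ} (ht : 2 ≤ t)
    (hK : ¬ ∃ s : Finset V, G.IsNClique t s ∧ ↑s ⊆ W) :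
    gchiOn G W ≤ (tourn G W).chi * (t - 1) + 1 := by
  classical
  obtain ⟨C, hC1, hC2⟩ := (tourn G W).exists_cover Set.univ
  have hmir : ∀ i, ∃ g : V → Fin (t - 1),
      ∀ u ∈ Subtype.val '' (C i), ∀ v ∈ Subtype.val '' (C i), G.Adj u v → g u ≠ g v := by
    intro i
    apply mirsky G ht
    · rintro _ ⟨α, hα, rfl⟩ _ ⟨β, hβ, rfl⟩ _ ⟨γ, hγ, rfl⟩ hab hbc hAB hBC
      by_contra hAC
      refine hC1 i α hα β hβ γ hγ ?_ ?_ ?_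
      · exact Or.inl ⟨Subtype.coe_lt_coe.mp hab, hAB⟩
      · exact Or.inl ⟨Subtype.coe_lt_coe.mp hbc, hBC⟩
      · exact Or.inr ⟨Subtype.coe_lt_coe.mp (hab.trans hbc), fun h => hAC h.symm⟩
    · intro s hs hclq
      by_contra hlt
      push_neg at hlt
      obtain ⟨s', hs', hcard⟩ := Finset.exists_subset_card_eq (s := s) (n := t) (by omega)
      refine hK ⟨s', ⟨hclq.subset (Finset.coe_subset.mpr hs'), hcard⟩, ?_⟩
      exact (Finset.coe_subset.mpr hs').trans (hs.trans (Subtype.coe_image_subset W (C i)))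
  choose g hg using hmir
  have hidx : ∀ u : ↥W, ∃ i, u ∈ C i := fun u => Set.mem_iUnion.mp (hC2 (Set.mem_univ u))
  choose idx hidx' using hidx
  have hcalc : gchiOn G W ≤ Fintype.card (Option (Fin ((tourn G W).chi) × Fin (t - 1))) := by
    refine gchiOn_le_card G
      (fun v => if hv : v ∈ W then some (idx ⟨v, hv⟩, g (idx ⟨v, hv⟩) v) else none) ?_
    intro u hu v hv hadj heq
    rw [dif_pos hu, dif_pos hv] at heq
    rw [Option.some.injEq] at heq
    replace heq := Prod.mk.inj heq
    obtain ⟨heq1, heq2⟩ := heq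
    rw [← heq1] at heq2
    refine hg (idx ⟨u, hu⟩) u ⟨⟨u, hu⟩, hidx' _, rfl⟩ v ⟨⟨v, hv⟩, ?_, rfl⟩ hadj heq2
    exact heq1 ▸ hidx' ⟨v, hv⟩
  simpa using hcalc

end Tourn

/-- The main induction on clique number. -/
lemma key_induction
    (hyp : ∀ c : ℕ, ∃ d : ℕ, ∀ G : Tournament, d ≤ G.chi →
      ∃ A B : Set G.V, G.CompletePair A B ∧ c ≤ G.chiOn A ∧ c ≤ G.chiOn B) :
    ∀ t c : ℕ, 1 ≤ c → ∃ d : ℕ, 1 ≤ d ∧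
      ∀ (V : Type) [Fintype V] (G : SimpleGraph V) (W : Set V),
        d ≤ gchiOn G W → (¬ ∃ s : Finset V, G.IsNClique t s ∧ ↑s ⊆ W) →
        ∃ A B : Set V, Disjoint A B ∧ (∀ a ∈ A, ∀ b ∈ B, ¬ G.Adj a b) ∧
          c ≤ gchiOn G A ∧ c ≤ gchiOn G B := by
  intro t
  induction t using Nat.strong_induction_on with
  | _ t IH =>
  intro c hc
  by_cases ht : t ≤ 2
  · -- base cases: the clique hypothesis forces no edges inside W
    refine ⟨2, by norm_num, ?_⟩
    intro V _ G W hchi hK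
    classical
    exfalso
    have hnoedge : ∀ u ∈ W, ∀ v ∈ W, ¬ G.Adj u v := by
      intro u hu v hv hadj
      apply hK
      interval_cases t
      · exact ⟨∅, ⟨by simp, by simp⟩, by simp⟩
      · exact ⟨{u}, ⟨by simp, by simp⟩, by simp [hu]⟩
      · refine ⟨{u, v}, ⟨?_, Finset.card_pair hadj.ne⟩, ?_⟩
        · rw [Finset.coe_insert, Finset.coe_singleton]
          intro a ha b hb hab
          rcases ha with rfl | ha <;> rcases hb with rfl | hb
          · exact absurd rfl hab
          · rw [Set.mem_singleton_iff] at hb; subst hb; exact hadj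
          · rw [Set.mem_singleton_iff] at ha; subst ha; exact hadj.symm
          · rw [Set.mem_singleton_iff] at ha hb; subst ha; subst hb; exact absurd rfl hab
        · rw [Finset.coe_insert, Finset.coe_singleton]
          exact Set.insert_subset hu (Set.singleton_subset_iff.mpr hv)
    have h1 : gchiOn G W ≤ 1 :=
      gchiOn_le G (fun _ => (0 : Fin 1)) (fun u hu v hv hadj => absurd hadj (hnoedge u hu v hv))
    omega
  · push_neg at ht
    -- t ≥ 3
    obtain ⟨d₁, hd₁, hP₁⟩ := IH (t - 1) (by omega) c hc
    obtain ⟨D, hD⟩ := hyp (c + d₁ + 1)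
    refine ⟨(max D 1) * (t - 1) + 1, Nat.le_add_left 1 _, ?_⟩
    intro V _ G W hchi hK
    classical
    letI : LinearOrder V := LinearOrder.lift' (Fintype.equivFin V) (Equiv.injective _)
    -- tournament chromatic number is large
    have hchiT : max D 1 ≤ (tourn G W).chi := by
      by_contra hlt
      push_neg at hlt
      have h1 : gchiOn G W ≤ (tourn G W).chi * (t - 1) + 1 := gchiOn_le_mul G W (by omega) hK
      have h2 : (tourn G W).chi * (t - 1) ≤ (max D 1 - 1) * (t - 1) :=
        Nat.mul_le_mul_right _ (by omega)
      have h4 : (max D 1) * (t - 1) + 1 ≤ (max D 1 - 1) * (t - 1) + 1 :=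
        le_trans hchi (le_trans h1 (Nat.add_le_add_right h2 1))
      have h5 : max D 1 ≤ max D 1 - 1 :=
        Nat.le_of_mul_le_mul_right (by omega) (show 0 < t - 1 by omega)
      have h6 : 1 ≤ max D 1 := le_max_right _ _
      omega
    obtain ⟨A, B, hpair, hA, hB⟩ :
        ∃ A B : Set (↥W), (tourn G W).CompletePair A B ∧
          c + d₁ + 1 ≤ (tourn G W).chiOn A ∧ c + d₁ + 1 ≤ (tourn G W).chiOn B :=
      hD (tourn G W) (le_trans (le_max_left _ _) hchiT)
    obtain ⟨hdisj, hcomp⟩ := hpair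
    have hWne : (Set.univ : Set ↥W).Nonempty := by
      refine (tourn G W).nonempty_of_one_le_chiOn (S := Set.univ) ?_
      exact le_trans (le_max_right D 1) hchiT
    haveI : Nonempty ↥W := ⟨hWne.choose⟩
    -- threshold
    set Fl := Finset.univ.filter
      (fun x : ↥W => c ≤ (tourn G W).chiOn ((B ∩ Set.Iic x : Set ↥W))) with hFl
    have hFlne : Fl.Nonempty := by
      refine ⟨Finset.univ.max' Finset.univ_nonempty, ?_⟩
      rw [hFl, Finset.mem_filter]
      refine ⟨Finset.mem_univ _, ?_⟩
      have hBsub : B ⊆ Set.Iic (Finset.univ.max' Finset.univ_nonempty) :=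
        fun b _ => Finset.le_max' _ _ (Finset.mem_univ b)
      have : (B ∩ Set.Iic (Finset.univ.max' Finset.univ_nonempty) : Set ↥W) = B :=
        Set.inter_eq_left.mpr hBsub
      rw [this]
      omega
    set x0 := Fl.min' hFlne with hx0def
    have hx0 : c ≤ (tourn G W).chiOn ((B ∩ Set.Iic x0 : Set ↥W)) :=
      (Finset.mem_filter.mp (Fl.min'_mem hFlne)).2
    have hx0min : ∀ y : ↥W, c ≤ (tourn G W).chiOn ((B ∩ Set.Iic y : Set ↥W)) → x0 ≤ y := by
      intro y hy
      refine Fl.min'_le y ?_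
      rw [hFl, Finset.mem_filter]
      exact ⟨Finset.mem_univ _, hy⟩
    by_cases hcase : c ≤ (tourn G W).chiOn ((A ∩ Set.Ioi x0 : Set ↥W))
    · -- good case: A above, B below
      refine ⟨Subtype.val '' (A ∩ Set.Ioi x0), Subtype.val '' (B ∩ Set.Iic x0), ?_, ?_, ?_, ?_⟩
      · rw [Set.disjoint_left]
        rintro _ ⟨α, ⟨hαA, _⟩, rfl⟩ ⟨β, ⟨hβB, _⟩, heq⟩
        have hαβ : β = α := Subtype.val_injective heq
        exact Set.disjoint_left.mp hdisj hαA (hαβ ▸ hβB)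
      · rintro _ ⟨α, ⟨hαA, hαgt⟩, rfl⟩ _ ⟨β, ⟨hβB, hβle⟩, rfl⟩ hadj
        have hTadj := hcomp α hαA β hβB
        rw [tourn_adj] at hTadj
        rcases hTadj with ⟨h1, _⟩ | ⟨_, h2⟩
        · exact lt_asymm hαgt (h1.trans_le hβle)
        · exact h2 hadj
      · exact le_trans hcase (tourn_chiOn_le G W _)
      · exact le_trans hx0 (tourn_chiOn_le G W _)
    · push_neg at hcase
      -- B below x0 has small chi
      have hBlow : (tourn G W).chiOn ((B ∩ Set.Iio x0 : Set ↥W)) < c := by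
        by_contra hge
        push_neg at hge
        have hne2 : (B ∩ Set.Iio x0 : Set ↥W).Nonempty :=
          (tourn G W).nonempty_of_one_le_chiOn (le_trans hc hge)
        have hfin : (B ∩ Set.Iio x0 : Set ↥W).Finite := Set.toFinite _
        have hF2ne : hfin.toFinset.Nonempty := by rwa [Set.Finite.toFinset_nonempty]
        set y := hfin.toFinset.max' hF2ne with hy
        have hyB : y ∈ (B ∩ Set.Iio x0 : Set ↥W) := by
          have := hfin.toFinset.max'_mem hF2ne
          rwa [Set.Finite.mem_toFinset] at this
        have hsub : (B ∩ Set.Iio x0 : Set ↥W) ⊆ (B ∩ Set.Iic y : Set ↥W) := by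
          rintro b ⟨hb1, hb2⟩
          exact ⟨hb1, Finset.le_max' _ _ (hfin.mem_toFinset.mpr ⟨hb1, hb2⟩)⟩
        have hx0y : x0 ≤ y := hx0min y (le_trans hge ((tourn G W).chiOn_mono hsub))
        exact absurd hyB.2 (not_lt.mpr hx0y)
      have hBsplit : (tourn G W).chiOn B ≤
          (tourn G W).chiOn ((B ∩ Set.Iio x0 : Set ↥W)) +
            (tourn G W).chiOn ((B ∩ Set.Ici x0 : Set ↥W)) := by
        refine le_trans ((tourn G W).chiOn_mono ?_) ((tourn G W).chiOn_union _ _)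
        refine fun (b : ↥W) hb => ?_
        rcases lt_or_ge b x0 with h | h
        · exact Set.mem_union_left _ ⟨hb, h⟩
        · exact Set.mem_union_right _ ⟨hb, h⟩
      have hBhi : 1 ≤ (tourn G W).chiOn ((B ∩ Set.Ici x0 : Set ↥W)) := by omega
      obtain ⟨β0, hβ0⟩ : ∃ β0 : ↥W, β0 ∈ (B ∩ Set.Ici x0 : Set ↥W) :=
        (tourn G W).nonempty_of_one_le_chiOn hBhi
      have hAsplit : (tourn G W).chiOn A ≤
          (tourn G W).chiOn ((A ∩ Set.Iio x0 : Set ↥W)) +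
            (1 + (tourn G W).chiOn ((A ∩ Set.Ioi x0 : Set ↥W))) := by
        have hsub : A ⊆ ((A ∩ Set.Iio x0) ∪ ({x0} ∪ (A ∩ Set.Ioi x0)) : Set ↥W) := by
          intro a ha
          rcases lt_trichotomy a x0 with h | h | h
          · exact Set.mem_union_left _ ⟨ha, h⟩
          · exact Set.mem_union_right _ (Set.mem_union_left _ (Set.mem_singleton_iff.mpr h))
          · exact Set.mem_union_right _ (Set.mem_union_right _ ⟨ha, h⟩)
        refine le_trans ((tourn G W).chiOn_mono hsub) ?_
        refine le_trans ((tourn G W).chiOn_union _ _) ?_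
        refine Nat.add_le_add_left ?_ _
        refine le_trans ((tourn G W).chiOn_union _ _) ?_
        exact Nat.add_le_add_right ((tourn G W).chiOn_singleton_le x0) _
      have hAlow : d₁ ≤ (tourn G W).chiOn ((A ∩ Set.Iio x0 : Set ↥W)) := by omega
      -- recursive call inside A ∩ Iio x0
      have hW' : d₁ ≤ gchiOn G (Subtype.val '' (A ∩ Set.Iio x0)) :=
        le_trans hAlow (tourn_chiOn_le G W _)
      have hK' : ¬ ∃ s : Finset V, G.IsNClique (t - 1) s ∧
          ↑s ⊆ Subtype.val '' (A ∩ Set.Iio x0) := by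
        rintro ⟨s, hs1, hs2⟩
        have hb : (↑β0 : V) ∉ s := by
          intro hmem
          obtain ⟨α, ⟨hαA, _⟩, hval⟩ := hs2 (Finset.mem_coe.mpr hmem)
          have hαβ : α = β0 := Subtype.val_injective hval
          exact Set.disjoint_left.mp hdisj (hαβ ▸ hαA) hβ0.1
        apply hK
        refine ⟨insert (↑β0 : V) s, ⟨?_, ?_⟩, ?_⟩
        · rw [Finset.coe_insert]
          refine hs1.1.insert ?_
          intro a ha hne
          obtain ⟨α, ⟨hαA, hαlt⟩, rfl⟩ := hs2 ha
          have hTadj := hcomp α hαA β0 hβ0.1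
          rw [tourn_adj] at hTadj
          rcases hTadj with ⟨_, h2⟩ | ⟨h1, _⟩
          · exact h2.symm
          · exact absurd (hαlt.trans_le hβ0.2) (not_lt.mpr h1.le)
        · rw [Finset.card_insert_of_notMem hb, hs1.2]
          omega
        · rw [Finset.coe_insert]
          exact Set.insert_subset β0.2 (hs2.trans (Subtype.coe_image_subset W _))
      exact hP₁ V G (Subtype.val '' (A ∩ Set.Iio x0)) hW' hK'

/-- If the tournament conjecture holds, then the El-Zahar–Erdős statement holds. -/
theorem tournament_conj_implies_elzahar_erdos
    (hyp : ∀ c : ℕ, ∃ d : ℕ, ∀ G : Tournament, d ≤ G.chi →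
      ∃ A B : Set G.V, G.CompletePair A B ∧ c ≤ G.chiOn A ∧ c ≤ G.chiOn B) :
    ∀ t c : ℕ, 1 ≤ t → 1 ≤ c → ∃ d : ℕ, 1 ≤ d ∧
      ∀ (V : Type) [Fintype V] (G : SimpleGraph V),
        d ≤ gchiOn G Set.univ →
        (¬ ∃ s : Finset V, G.IsNClique t s) →
        ∃ A B : Set V, Disjoint A B ∧ (∀ a ∈ A, ∀ b ∈ B, ¬ G.Adj a b) ∧
          c ≤ gchiOn G A ∧ c ≤ gchiOn G B := by
  intro t c _ hc
  obtain ⟨d, hd, hP⟩ := key_induction hyp t c hc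
  refine ⟨d, hd, ?_⟩
  intro V _ G hchi hK
  exact hP V G Set.univ hchi (fun ⟨s, hs, _⟩ => hK ⟨s, hs⟩)
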